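/- For N ∈ ℕ and distinct κ_1,…,κ_N > 0, c_1,…,c_N > 0, the determinant of the N×N matrix I_N + C_N(0,x) equals 1 + ∑_{∅≠I⊆{1,…,N}} a_I e^{−2∑_{j∈I} κ_j x}, where each coefficient a_I is strictly positive (a_I = ∏_{j∈I}(c_j²/(2κ_j)) · ∏_{j<ℓ, j,ℓ∈I} ((κ_j−κ_ℓ)/(κ_j+κ_ℓ))²). -/

import Mathlib

noncomputable section

open Matrix Finset

section Aux

variable {n : Type*} [Fintype n] [DecidableEq n]

lemma det_piecewise_one (A : Matrix n n ℝ) (s : Finset n) :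
    Matrix.det (Matrix.of (s.piecewise A (1 : Matrix n n ℝ))) =
      Matrix.det (A.submatrix (fun i : {x // x ∈ s} => (i : n))
        (fun i : {x // x ∈ s} => (i : n))) := by
  classical
  rw [← Matrix.det_submatrix_equiv_self (Equiv.sumCompl (· ∈ s))]
  have h : (Matrix.of (s.piecewise A (1 : Matrix n n ℝ))).submatrix (Equiv.sumCompl (· ∈ s))
      (Equiv.sumCompl (· ∈ s)) =
      Matrix.fromBlocks (A.submatrix (fun i : {x // x ∈ s} => (i : n))
        (fun i : {x // x ∈ s} => (i : n)))
        (A.submatrix (fun i : {x // x ∈ s} => (i : n)) (fun i : {x // ¬ x ∈ s} => (i : n)))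
        0 (1 : Matrix {x // ¬ x ∈ s} {x // ¬ x ∈ s} ℝ) := by
    ext i j
    cases i with
    | inl i =>
      cases j with
      | inl j => simp [Finset.piecewise, i.2]
      | inr j => simp [Finset.piecewise, i.2]
    | inr i =>
      cases j with
      | inl j =>
        have : (i : n) ≠ (j : n) := fun h => i.2 (h ▸ j.2)
        simp [Finset.piecewise, i.2, Matrix.one_apply_ne this]
      | inr j =>
        simp [Finset.piecewise, i.2, Matrix.one_apply, Subtype.ext_iff]
  rw [h, Matrix.det_fromBlocks_zero₂₁, Matrix.det_one, mul_one]

lemma det_one_add_expand (A : Matrix n n ℝ) :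
    (1 + A).det = ∑ s : Finset n, Matrix.det (A.submatrix
      (fun i : {x // x ∈ s} => (i : n)) (fun i : {x // x ∈ s} => (i : n))) := by
  classical
  have h1 : ((1 : Matrix n n ℝ) + A).det
      = Matrix.detRowAlternating ((fun i => A i) + (fun i => (1 : Matrix n n ℝ) i)) := by
    rw [add_comm]; rfl
  rw [h1, ← AlternatingMap.coe_multilinearMap, MultilinearMap.map_add_univ]
  exact Finset.sum_congr rfl fun s _ => det_piecewise_one A s

end Aux

lemma pairprod {N : ℕ} (g : Fin N → Fin N → ℝ) (hg : ∀ i j, g i j = g j i)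
    (a : Fin N) (s : Finset (Fin N)) (ha : a ∉ s) :
    ∏ j ∈ insert a s, ∏ l ∈ (insert a s).filter (fun l => j < l), g j l
      = (∏ l ∈ s, g a l) * ∏ j ∈ s, ∏ l ∈ s.filter (fun l => j < l), g j l := by
  rw [Finset.prod_insert ha]
  have h1 : (insert a s).filter (fun l => a < l) = s.filter (fun l => a < l) := by
    rw [Finset.filter_insert, if_neg (lt_irrefl a)]
  have h2 : ∀ j ∈ s, ∏ l ∈ (insert a s).filter (fun l => j < l), g j l
      = (if j < a then g j a else 1) * ∏ l ∈ s.filter (fun l => j < l), g j l := by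
    intro j hj
    rw [Finset.filter_insert]
    by_cases hja : j < a
    · rw [if_pos hja, if_pos hja,
        Finset.prod_insert (fun h => ha (Finset.mem_of_mem_filter a h))]
    · rw [if_neg hja, if_neg hja, one_mul]
  rw [h1, Finset.prod_congr rfl h2, Finset.prod_mul_distrib, ← Finset.prod_filter]
  have h3 : ∏ j ∈ s.filter (fun j => j < a), g j a
      = ∏ j ∈ s.filter (fun j => ¬ a < j), g a j := by
    apply Finset.prod_congr _ (fun j _ => hg j a)
    apply Finset.filter_congr
    intro j hj
    have : j ≠ a := fun h => ha (h ▸ hj)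
    simp only [not_lt]
    exact ⟨le_of_lt, fun h => lt_of_le_of_ne h this⟩
  rw [h3]
  rw [show ∀ A B C : ℝ, A * (B * C) = (A * B) * C by intros; ring]
  rw [Finset.prod_filter_mul_prod_filter_not s (fun l => a < l) (g a)]

/-- The insertion equiv. -/
def insEquiv {N : ℕ} (a : Fin N) (s : Finset (Fin N)) (ha : a ∉ s) :
    {x // x ∈ s} ⊕ Unit ≃ {x // x ∈ insert a s} where
  toFun := Sum.elim (fun i => ⟨i.1, Finset.mem_insert_of_mem i.2⟩)
    (fun _ => ⟨a, Finset.mem_insert_self a s⟩)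
  invFun i := if h : i.1 ∈ s then Sum.inl ⟨i.1, h⟩ else Sum.inr ()
  left_inv i := by
    cases i with
    | inl i => simp
    | inr i => simp [ha]
  right_inv i := by
    by_cases h : i.1 ∈ s
    · simp [h]
    · have : i.1 = a := by
        rcases Finset.mem_insert.mp i.2 with h' | h'
        · exact h'
        · exact absurd h' h
      simp only [h, dite_false]
      exact Subtype.ext this.symm

lemma cauchy_det {N : ℕ} (κ : Fin N → ℝ) (hκ : ∀ j, 0 < κ j)
    (s : Finset (Fin N)) :
    Matrix.det (Matrix.of fun i j : {x // x ∈ s} => (κ i.1 + κ j.1)⁻¹) =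
      (∏ j ∈ s, (2 * κ j)⁻¹) *
        ∏ j ∈ s, ∏ l ∈ s.filter (fun l => j < l), ((κ j - κ l) / (κ j + κ l)) ^ 2 := by
  classical
  induction s using Finset.induction_on with
  | empty => simp
  | @insert a s ha ih =>
    have hpos : ∀ i j : Fin N, 0 < κ i + κ j := fun i j => add_pos (hκ i) (hκ j)
    have hne : ∀ i j : Fin N, κ i + κ j ≠ 0 := fun i j => (hpos i j).ne'
    rw [← Matrix.det_submatrix_equiv_self (insEquiv a s ha)]
    set d : {x // x ∈ s} → ℝ := fun i => (κ a - κ i.1) / (κ a + κ i.1) with hd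
    have hblock : (Matrix.of fun i j : {x // x ∈ insert a s} => (κ i.1 + κ j.1)⁻¹).submatrix
        (insEquiv a s ha) (insEquiv a s ha) =
        Matrix.fromBlocks
          (Matrix.of fun i j : {x // x ∈ s} => (κ i.1 + κ j.1)⁻¹)
          (Matrix.of fun (i : {x // x ∈ s}) (_ : Unit) => (κ i.1 + κ a)⁻¹)
          (Matrix.of fun (_ : Unit) (j : {x // x ∈ s}) => (κ a + κ j.1)⁻¹)
          (Matrix.of fun _ _ : Unit => (2 * κ a)⁻¹) := by
      ext i j
      cases i with
      | inl i => cases j with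
        | inl j => rfl
        | inr j => rfl
      | inr i => cases j with
        | inl j => rfl
        | inr j => show (κ a + κ a)⁻¹ = (2 * κ a)⁻¹; rw [two_mul]
    rw [hblock]
    set D : Matrix Unit Unit ℝ := Matrix.of fun _ _ : Unit => (2 * κ a)⁻¹ with hD
    have hdetD : D.det = (2 * κ a)⁻¹ := by simp [hD, Matrix.det_unique]
    have h2κ : (2 : ℝ) * κ a ≠ 0 := (mul_pos two_pos (hκ a)).ne'
    letI : Invertible D := ⟨Matrix.of fun _ _ : Unit => (2 * κ a), by
        ext i j
        simp [hD, Matrix.mul_apply, Matrix.one_apply]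
        field_simp
        exact div_self (hκ a).ne', by
        ext i j
        simp [hD, Matrix.mul_apply, Matrix.one_apply]
        field_simp
        exact div_self (hκ a).ne'⟩
    have hinvD : (⅟D : Matrix Unit Unit ℝ) = Matrix.of fun _ _ : Unit => (2 * κ a) := rfl
    rw [Matrix.det_fromBlocks₂₂]
    have hschur : (Matrix.of fun i j : {x // x ∈ s} => (κ i.1 + κ j.1)⁻¹) -
        (Matrix.of fun (i : {x // x ∈ s}) (_ : Unit) => (κ i.1 + κ a)⁻¹) * ⅟D *
        (Matrix.of fun (_ : Unit) (j : {x // x ∈ s}) => (κ a + κ j.1)⁻¹) =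
        Matrix.diagonal d * ((Matrix.of fun i j : {x // x ∈ s} => (κ i.1 + κ j.1)⁻¹)
          * Matrix.diagonal d) := by
      rw [hinvD]
      ext i j
      simp only [Matrix.sub_apply, Matrix.diagonal_mul, Matrix.mul_diagonal, Matrix.of_apply]
      simp only [Matrix.mul_apply, Fintype.sum_unique, Matrix.of_apply]
      simp only [hd]
      have h1 := hne i.1 j.1
      have h2 := hne i.1 a
      have h3 := hne a j.1
      have h4 := hne a i.1
      field_simp
      ring
    rw [hschur, Matrix.det_mul, Matrix.det_mul, Matrix.det_diagonal, hdetD, ih]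
    have hprodd : ∏ i : {x // x ∈ s}, d i = ∏ i ∈ s, (κ a - κ i) / (κ a + κ i) :=
      Finset.prod_coe_sort s (fun i => (κ a - κ i) / (κ a + κ i))
    rw [hprodd]
    rw [Finset.prod_insert ha,
      pairprod (fun j l => ((κ j - κ l) / (κ j + κ l)) ^ 2) (by
        intro i j
        have hsq : (κ i - κ j) ^ 2 = (κ j - κ i) ^ 2 := by ring
        simp only [div_pow, hsq, add_comm (κ i) (κ j)]) a s ha]
    have : ∏ l ∈ s, ((κ a - κ l) / (κ a + κ l)) ^ 2
        = (∏ i ∈ s, (κ a - κ i) / (κ a + κ i)) ^ 2 := by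
      rw [Finset.prod_pow]
    rw [this]
    ring

/-- The coefficient `a_I = ∏_{j∈I} c_j²/(2κ_j) · ∏_{j<ℓ ∈ I} ((κ_j-κ_ℓ)/(κ_j+κ_ℓ))²`. -/
def solitonCoeff {N : ℕ} (κ c : Fin N → ℝ) (I : Finset (Fin N)) : ℝ :=
  (∏ j ∈ I, (c j) ^ 2 / (2 * κ j)) *
    ∏ j ∈ I, ∏ l ∈ I.filter (fun l => j < l), ((κ j - κ l) / (κ j + κ l)) ^ 2

lemma soliton_term {N : ℕ} (κ c : Fin N → ℝ) (hκ : ∀ j, 0 < κ j) (x : ℝ)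
    (s : Finset (Fin N)) :
    Matrix.det ((Matrix.of fun j l => c j * c l * Real.exp (-(κ j + κ l) * x) / (κ j + κ l)).submatrix
      (fun i : {y // y ∈ s} => (i : Fin N)) (fun i : {y // y ∈ s} => (i : Fin N))) =
    solitonCoeff κ c s * Real.exp (-2 * (∑ j ∈ s, κ j) * x) := by
  classical
  set v : {y // y ∈ s} → ℝ := fun i => c i.1 * Real.exp (-κ i.1 * x) with hv
  have hA : (Matrix.of fun j l => c j * c l * Real.exp (-(κ j + κ l) * x) / (κ j + κ l)).submatrix
      (fun i : {y // y ∈ s} => (i : Fin N)) (fun i : {y // y ∈ s} => (i : Fin N)) =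
      Matrix.diagonal v * ((Matrix.of fun i j : {y // y ∈ s} => (κ i.1 + κ j.1)⁻¹)
        * Matrix.diagonal v) := by
    ext i j
    simp only [Matrix.submatrix_apply, Matrix.of_apply, Matrix.diagonal_mul, Matrix.mul_diagonal,
      hv]
    rw [show -(κ i.1 + κ j.1) * x = (-κ i.1 * x) + (-κ j.1 * x) by ring, Real.exp_add]
    ring
  rw [hA, Matrix.det_mul, Matrix.det_mul, Matrix.det_diagonal, cauchy_det κ hκ s]
  have hprodv : ∏ i : {y // y ∈ s}, v i = ∏ i ∈ s, (c i * Real.exp (-κ i * x)) :=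
    Finset.prod_coe_sort s (fun i => c i * Real.exp (-κ i * x))
  rw [hprodv, Finset.prod_mul_distrib, ← Real.exp_sum]
  have hsum : ∑ i ∈ s, -κ i * x = -(∑ j ∈ s, κ j) * x := by
    rw [← Finset.sum_mul]
    congr 1
    rw [← Finset.sum_neg_distrib]
  rw [hsum]
  have hexp2 : Real.exp (-(∑ j ∈ s, κ j) * x) * Real.exp (-(∑ j ∈ s, κ j) * x)
      = Real.exp (-2 * (∑ j ∈ s, κ j) * x) := by
    rw [← Real.exp_add]
    congr 1
    ring
  have hc2 : ∏ j ∈ s, (c j) ^ 2 / (2 * κ j) = (∏ j ∈ s, c j) ^ 2 * ∏ j ∈ s, (2 * κ j)⁻¹ := by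
    rw [← Finset.prod_pow, ← Finset.prod_mul_distrib]
    exact Finset.prod_congr rfl fun j _ => by rw [div_eq_mul_inv]
  rw [solitonCoeff, hc2, ← hexp2]
  ring

/-- Expansion of the N-soliton tau function:
`det (1_N + C_N(0,x)) = 1 + ∑_{∅≠I} a_I e^{-2 ∑_{j∈I} κ_j x}` with all `a_I > 0`. -/
theorem statement3 (N : ℕ) (κ c : Fin N → ℝ) (hκ : ∀ j, 0 < κ j)
    (hinj : Function.Injective κ) (hc : ∀ j, 0 < c j) (x : ℝ) :
    (Matrix.det ((1 : Matrix (Fin N) (Fin N) ℝ) +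
        Matrix.of fun j l => c j * c l * Real.exp (-(κ j + κ l) * x) / (κ j + κ l)) =
      1 + ∑ I ∈ Finset.univ.powerset.filter (fun I : Finset (Fin N) => I.Nonempty),
        solitonCoeff κ c I * Real.exp (-2 * (∑ j ∈ I, κ j) * x)) ∧
    (∀ I : Finset (Fin N), I.Nonempty → 0 < solitonCoeff κ c I) := by
  classical
  constructor
  · rw [det_one_add_expand]
    have h1 : ∑ s : Finset (Fin N),
        Matrix.det ((Matrix.of fun j l => c j * c l * Real.exp (-(κ j + κ l) * x) / (κ j + κ l)).submatrix
          (fun i : {y // y ∈ s} => (i : Fin N)) (fun i : {y // y ∈ s} => (i : Fin N)))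
        = ∑ s ∈ Finset.univ.powerset,
            solitonCoeff κ c s * Real.exp (-2 * (∑ j ∈ s, κ j) * x) := by
      rw [Finset.powerset_univ]
      exact Finset.sum_congr rfl fun s _ => soliton_term κ c hκ x s
    rw [h1, ← Finset.sum_filter_add_sum_filter_not Finset.univ.powerset
      (fun I : Finset (Fin N) => I.Nonempty)]
    have h2 : Finset.univ.powerset.filter (fun I : Finset (Fin N) => ¬ I.Nonempty) = {∅} := by
      ext I
      simp [Finset.not_nonempty_iff_eq_empty]
    rw [h2, Finset.sum_singleton]
    have h3 : solitonCoeff κ c (∅ : Finset (Fin N)) *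
        Real.exp (-2 * (∑ j ∈ (∅ : Finset (Fin N)), κ j) * x) = 1 := by
      simp [solitonCoeff]
    rw [h3, add_comm]
  · intro I _
    apply mul_pos
    · apply Finset.prod_pos
      intro j _
      have := hκ j
      have := hc j
      positivity
    · apply Finset.prod_pos
      intro j _
      apply Finset.prod_pos
      intro l hl
      have hjl : j ≠ l := (Finset.mem_filter.mp hl).2.ne
      have hκne : κ j ≠ κ l := fun h => hjl (hinj h)
      have hden : κ j + κ l ≠ 0 := (add_pos (hκ j) (hκ l)).ne'
      exact pow_two_pos_of_ne_zero (div_ne_zero (sub_ne_zero.mpr hκne) hden)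

end
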